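/- The Cayley tree function T(z) = Σ_{n≥1} n^{n-1} z^n / n!, which satisfies T(z) = z e^{T(z)}, is not a holonomic function; equivalently, the sequence n^{n-1}/n! (and hence the sequence n^n) is not holonomic. -/

import Mathlib

open Finset

/-- A sequence is holonomic (P-recursive) if it satisfies a linear recurrence
with polynomial coefficients whose leading coefficient is not identically zero. -/
def HolonomicSeq (f : ℕ → ℂ) : Prop :=
  ∃ (d : ℕ) (p : ℕ → Polynomial ℂ), p 0 ≠ 0 ∧
    ∀ n : ℕ, ∑ j ∈ Finset.range (d + 1), (p j).eval (n : ℂ) * f (n + (d - j)) = 0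

namespace CayleyNH

open Complex Polynomial Filter Topology

/-- Analytic extension of `x ↦ log(1+kx)/x` through `0`. -/
noncomputable def lg (k : ℕ) : ℂ → ℂ := dslope (fun x => Complex.log (1 + (k : ℂ) * x)) 0

/-- `g c k x` is the analytic function `(1+kx)^(1/x + k - c)`. -/
noncomputable def g (c k : ℕ) (x : ℂ) : ℂ :=
  Complex.exp (((k : ℂ) - (c : ℂ)) * Complex.log (1 + (k : ℂ) * x) + lg k x)

/-- The domain: the slit plane pulled back under `x ↦ 1 + d·x`. -/
def Om (d : ℕ) : Set ℂ := {x | 1 + (d : ℂ) * x ∈ Complex.slitPlane}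

lemma isOpen_Om (d : ℕ) : IsOpen (Om d) :=
  Complex.isOpen_slitPlane.preimage (by continuity)

lemma zero_mem_Om (d : ℕ) : (0 : ℂ) ∈ Om d := by simp [Om]

lemma lg_eq_of_ne {k : ℕ} {x : ℂ} (hx : x ≠ 0) :
    lg k x = Complex.log (1 + (k : ℂ) * x) / x := by
  rw [lg, dslope_of_ne _ hx, slope_def_field]
  simp

lemma mem_slitPlane_of_Om {d k : ℕ} (hk : k ≤ d) {x : ℂ} (hx : x ∈ Om d) :
    1 + (k : ℂ) * x ∈ Complex.slitPlane := by
  rcases Nat.eq_zero_or_pos k with rfl | hkpos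
  · simpa using Complex.one_mem_slitPlane
  have hx' : 0 < 1 + (d : ℝ) * x.re ∨ (d : ℝ) * x.im ≠ 0 := by
    simpa [Om, Complex.mem_slitPlane_iff, Complex.add_re, Complex.add_im,
      Complex.mul_re, Complex.mul_im] using hx
  rw [Complex.mem_slitPlane_iff]
  simp only [Complex.add_re, Complex.add_im, Complex.mul_re, Complex.mul_im,
    Complex.one_re, Complex.one_im, Complex.natCast_re, Complex.natCast_im]
  rcases hx' with h | h
  · left
    have hkd : (k : ℝ) ≤ (d : ℝ) := by exact_mod_cast hk
    have hk1 : (1 : ℝ) ≤ (k : ℝ) := by exact_mod_cast hkpos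
    norm_num
    rcases le_or_gt 0 x.re with h2 | h2
    · nlinarith
    · nlinarith
  · right
    have him : (x.im) ≠ 0 := by
      intro h0; rw [h0] at h; simp at h
    have hk0 : (k:ℝ) ≠ 0 := by exact_mod_cast hkpos.ne'
    norm_num
    exact ⟨hkpos.ne', him⟩


lemma diff_lg_zero (k : ℕ) : DifferentiableAt ℂ (lg k) 0 := by
  have hr : (0:ℝ) < ((k : ℝ) + 1)⁻¹ := by positivity
  have hb : Metric.ball (0 : ℂ) ((k : ℝ) + 1)⁻¹ ∈ 𝓝 (0 : ℂ) := Metric.ball_mem_nhds _ hr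
  have hdif : DifferentiableOn ℂ (fun x => Complex.log (1 + (k : ℂ) * x))
      (Metric.ball (0 : ℂ) ((k : ℝ) + 1)⁻¹) := by
    intro x hx
    have hnorm : ‖(k : ℂ) * x‖ < 1 := by
      rw [norm_mul]
      have hxn : ‖x‖ < ((k : ℝ) + 1)⁻¹ := by simpa [Metric.mem_ball] using hx
      have : ‖(k : ℂ)‖ = (k : ℝ) := by simp
      rw [this]
      calc (k : ℝ) * ‖x‖ ≤ ((k:ℝ) + 1) * ‖x‖ := by nlinarith [norm_nonneg x]
        _ < ((k:ℝ) + 1) * ((k : ℝ) + 1)⁻¹ := by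
            apply mul_lt_mul_of_pos_left hxn (by positivity)
        _ = 1 := by field_simp
    have hin : DifferentiableAt ℂ (fun y : ℂ => 1 + (k:ℂ) * y) x := by fun_prop
    exact (hin.clog (Complex.mem_slitPlane_of_norm_lt_one hnorm)).differentiableWithinAt
  exact ((Complex.differentiableOn_dslope hb).2 hdif).differentiableAt hb

lemma diff_lg_ne (k : ℕ) {x : ℂ} (hx : x ≠ 0)
    (hs : 1 + (k : ℂ) * x ∈ Complex.slitPlane) : DifferentiableAt ℂ (lg k) x := by
  have h1 : DifferentiableAt ℂ (fun y => Complex.log (1 + (k : ℂ) * y) / y) x := by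
    have hin : DifferentiableAt ℂ (fun y : ℂ => 1 + (k:ℂ) * y) x := by fun_prop
    exact DifferentiableAt.div (hin.clog hs) differentiableAt_id hx
  apply h1.congr_of_eventuallyEq
  filter_upwards [isOpen_ne.mem_nhds hx] with y hy
  exact lg_eq_of_ne hy

lemma cont_lg_ne (k : ℕ) {x : ℂ} (hx : x ≠ 0)
    (hs : 1 + (k : ℂ) * x ∈ Complex.slitPlane) : ContinuousAt (lg k) x :=
  (diff_lg_ne k hx hs).continuousAt

lemma diff_g {d c k : ℕ} (hk : k ≤ d) {x : ℂ} (hx : x ∈ Om d) :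
    DifferentiableAt ℂ (g c k) x := by
  have hs := mem_slitPlane_of_Om hk hx
  have hlg : DifferentiableAt ℂ (lg k) x := by
    rcases eq_or_ne x 0 with rfl | hx0
    · exact diff_lg_zero k
    · exact diff_lg_ne k hx0 hs
  apply Complex.differentiable_exp.differentiableAt.comp
  apply DifferentiableAt.add _ hlg
  apply (differentiableAt_const _).mul
  have hin : DifferentiableAt ℂ (fun y : ℂ => 1 + (k:ℂ) * y) x := by fun_prop
  exact hin.clog hs

lemma cont_g_ne {c k : ℕ} {x : ℂ} (hx : x ≠ 0)
    (hs : 1 + (k : ℂ) * x ∈ Complex.slitPlane) : ContinuousAt (g c k) x := by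
  apply Complex.continuous_exp.continuousAt.comp
  apply ContinuousAt.add
  · have hin : ContinuousAt (fun y : ℂ => 1 + (k:ℂ) * y) x := by fun_prop
    exact continuousAt_const.mul (hin.clog hs)
  · exact cont_lg_ne k hx hs

lemma g_eval_inv_nat (c k n : ℕ) (hc : c ≤ 1) (hn : 1 ≤ n) :
    g c k ((n : ℂ)⁻¹) = (1 + (k : ℂ) * ((n : ℂ)⁻¹)) ^ (n + k - c) := by
  have hn0 : ((n : ℂ)) ≠ 0 := by exact_mod_cast Nat.one_le_iff_ne_zero.mp hn
  have hxne : ((n : ℂ))⁻¹ ≠ 0 := inv_ne_zero hn0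
  have hbase : (1 + (k : ℂ) * ((n : ℂ)⁻¹)) ≠ 0 := by
    have : (1 + (k : ℂ) * ((n : ℂ)⁻¹)) = (((1 + (k:ℝ)/n : ℝ)) : ℂ) := by
      push_cast; ring
    rw [this]
    have : (0:ℝ) < 1 + (k:ℝ)/n := by positivity
    exact_mod_cast this.ne'
  rw [g, lg_eq_of_ne hxne, div_inv_eq_mul, mul_comm (Complex.log _) ((n:ℕ):ℂ)]
  have hexp : ((k : ℂ) - (c : ℂ)) * Complex.log (1 + (k : ℂ) * ((n : ℂ)⁻¹))
      + (n : ℂ) * Complex.log (1 + (k : ℂ) * ((n : ℂ)⁻¹))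
      = ((n + k - c : ℕ) : ℂ) * Complex.log (1 + (k : ℂ) * ((n : ℂ)⁻¹)) := by
    have : ((n + k - c : ℕ) : ℂ) = (n : ℂ) + (k : ℂ) - (c : ℂ) := by
      have : c ≤ n + k := le_trans hc (le_trans hn (Nat.le_add_right n k))
      push_cast [Nat.cast_sub this]
      ring
    rw [this]; ring
  rw [hexp, Complex.exp_nat_mul, Complex.exp_log hbase]


lemma isPreconnected_Om (d : ℕ) : IsPreconnected (Om d) := by
  have hpath : IsPathConnected (Om d) := by
    refine ⟨0, zero_mem_Om d, fun {y} hy => JoinedIn.of_segment_subset ?_⟩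
    intro z hz
    rw [segment_eq_image] at hz
    obtain ⟨θ, hθ, rfl⟩ := hz
    simp only [smul_zero, zero_add]
    have hy' : 0 < 1 + (d:ℝ) * y.re ∨ (d:ℝ) * y.im ≠ 0 := by
      simpa [Om, Complex.mem_slitPlane_iff] using hy
    show 1 + (d:ℂ) * (θ • y) ∈ Complex.slitPlane
    rw [Complex.mem_slitPlane_iff]
    simp only [Complex.add_re, Complex.add_im, Complex.mul_re, Complex.mul_im,
      Complex.one_re, Complex.one_im, Complex.natCast_re, Complex.natCast_im,
      Complex.real_smul, Complex.ofReal_mul, Complex.mul_im, Complex.mul_re,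
      Complex.ofReal_re, Complex.ofReal_im]
    rcases eq_or_lt_of_le hθ.1 with h0 | h0
    · left; rw [← h0]; norm_num
    rcases hy' with h | h
    · left
      have h1 : θ ≤ 1 := hθ.2
      norm_num
      nlinarith
    · right
      have him : y.im ≠ 0 := by intro h0; rw [h0] at h; simp at h
      have hd : (d:ℝ) ≠ 0 := by intro h0; rw [h0] at h; simp at h
      norm_num
      refine ⟨?_, h0.ne', him⟩
      exact_mod_cast hd
  exact hpath.isConnected.isPreconnected

noncomputable def Q (N : ℕ) (p : Polynomial ℂ) : Polynomial ℂ :=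
  ∑ i ∈ range (N + 1), Polynomial.C (p.coeff i) * Polynomial.X ^ (N - i)

lemma Q_eval {N : ℕ} {p : Polynomial ℂ} (hN : p.natDegree ≤ N) {x : ℂ} (hx : x ≠ 0) :
    (Q N p).eval x = x ^ N * p.eval x⁻¹ := by
  rw [Polynomial.eval_eq_sum_range' (lt_of_le_of_lt hN (Nat.lt_succ_self N)), Q,
    Polynomial.eval_finset_sum, Finset.mul_sum]
  refine Finset.sum_congr rfl fun i hi => ?_
  rw [Finset.mem_range, Nat.lt_succ_iff] at hi
  rw [Polynomial.eval_mul, Polynomial.eval_C, Polynomial.eval_pow, Polynomial.eval_X,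
    inv_pow, pow_sub₀ x hx hi]
  ring

lemma Q_eq_zero {N : ℕ} {p : Polynomial ℂ} (hN : p.natDegree ≤ N)
    (h : Q N p = 0) : p = 0 := by
  apply Polynomial.eq_zero_of_infinite_isRoot
  apply Set.Infinite.mono (s := {y : ℂ | y ≠ 0})
  · intro y hy
    have hx : (y⁻¹ : ℂ) ≠ 0 := inv_ne_zero hy
    have := Q_eval hN hx
    rw [h, Polynomial.eval_zero, inv_inv] at this
    have hpy : p.eval y = 0 := by
      rcases mul_eq_zero.mp this.symm with h1 | h1
      · exact absurd h1 (pow_ne_zero _ hx)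
      · exact h1
    exact hpy
  · exact (Set.finite_singleton (0:ℂ)).infinite_compl.mono (by intro y hy; simpa using hy)


lemma master (d c : ℕ) (hc : c ≤ 1) (R : ℕ → Polynomial ℂ)
    (hR : ∀ n : ℕ, 1 ≤ n →
      ∑ k ∈ range (d + 1), (R k).eval ((n : ℂ)⁻¹) *
        (1 + (k : ℂ) * ((n : ℂ)⁻¹)) ^ (n + k - c) = 0) :
    R d = 0 := by
  have hinj0 : Function.Injective (fun m : ℕ => (((m : ℂ) + 1))⁻¹) := by
    intro a b hab
    simp only [inv_inj] at hab
    have : ((a : ℂ)) = b := by linear_combination hab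
    exact_mod_cast this
  rcases Nat.eq_zero_or_pos d with rfl | hd
  · -- degenerate case d = 0
    apply Polynomial.eq_zero_of_infinite_isRoot
    apply Set.infinite_of_injective_forall_mem (f := fun m : ℕ => (((m : ℂ) + 1))⁻¹) hinj0
    intro m
    have h := hR (m + 1) (Nat.le_add_left 1 m)
    simp only [range_one, sum_singleton, Nat.cast_zero, zero_mul, add_zero, one_pow, mul_one,
      Nat.cast_add, Nat.cast_one] at h
    simpa [Polynomial.IsRoot] using h
  -- main case
  set G : ℂ → ℂ := fun x => ∑ k ∈ range (d + 1), (R k).eval x * g c k x with hG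
  have hGanal : AnalyticOnNhd ℂ G (Om d) := by
    apply DifferentiableOn.analyticOnNhd _ (isOpen_Om d)
    intro x hx
    apply DifferentiableAt.differentiableWithinAt
    apply DifferentiableAt.fun_sum
    intro k hk
    exact ((R k).differentiableAt).mul (diff_g (Nat.lt_succ_iff.mp (mem_range.mp hk)) hx)
  have hGzero : ∀ n : ℕ, 1 ≤ n → G ((n : ℂ)⁻¹) = 0 := by
    intro n hn
    rw [hG]
    calc ∑ k ∈ range (d + 1), (R k).eval ((n : ℂ)⁻¹) * g c k ((n : ℂ)⁻¹)
        = ∑ k ∈ range (d + 1), (R k).eval ((n : ℂ)⁻¹) *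
            (1 + (k : ℂ) * ((n : ℂ)⁻¹)) ^ (n + k - c) :=
          Finset.sum_congr rfl fun k _ => by rw [g_eval_inv_nat c k n hc hn]
      _ = 0 := hR n hn
  have hfreq : ∃ᶠ z in 𝓝[≠] (0 : ℂ), G z = 0 := by
    have htend : Tendsto (fun m : ℕ => (((m : ℂ) + 1))⁻¹) atTop (𝓝[≠] (0 : ℂ)) := by
      rw [tendsto_nhdsWithin_iff]
      constructor
      · have hre : Tendsto (fun m : ℕ => (1 / ((m : ℝ) + 1) : ℝ)) atTop (𝓝 0) :=
          tendsto_one_div_add_atTop_nhds_zero_nat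
        have hC : Tendsto (fun m : ℕ => ((1 / ((m : ℝ) + 1) : ℝ) : ℂ)) atTop (𝓝 ((0:ℝ) : ℂ)) :=
          (Complex.continuous_ofReal.tendsto _).comp hre
        have heq : (fun m : ℕ => ((1 / ((m : ℝ) + 1) : ℝ) : ℂ)) =
            fun m : ℕ => ((m : ℂ) + 1)⁻¹ := by
          funext m; push_cast [one_div]; ring
        rw [heq] at hC
        simpa using hC
      · refine Eventually.of_forall fun m => ?_
        simp only [Set.mem_compl_iff, Set.mem_singleton_iff, inv_eq_zero]
        intro h
        have : ((m : ℂ)) + 1 ≠ 0 := by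
          have : ((m + 1 : ℕ) : ℂ) ≠ 0 := Nat.cast_ne_zero.mpr (Nat.succ_ne_zero m)
          simpa [Nat.cast_add, Nat.cast_one] using this
        exact this h
    exact htend.frequently (Frequently.of_forall fun m => by
      have := hGzero (m + 1) (Nat.le_add_left 1 m)
      simpa [Nat.cast_add, Nat.cast_one] using this)
  have hEq : Set.EqOn G 0 (Om d) :=
    hGanal.eqOn_zero_of_preconnected_of_frequently_eq_zero (isPreconnected_Om d)
      (zero_mem_Om d) hfreq
  -- produce roots of R d
  have hroot : ∀ s : ℝ, 0 < s → s < 1 → (R d).IsRoot ((((s - d)⁻¹ : ℝ)) : ℂ) := by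
    intro s hs0 hs1
    have hd1 : (1:ℝ) ≤ d := by exact_mod_cast hd
    have hsd : s - (d:ℝ) < 0 := by linarith
    set x₀ : ℂ := (((s - d)⁻¹ : ℝ) : ℂ) with hx₀def
    have hx0r : ((s - d)⁻¹ : ℝ) < 0 := inv_neg''.mpr hsd
    have hx0 : x₀ ≠ 0 := by
      simp only [hx₀def, ne_eq, Complex.ofReal_eq_zero]
      exact hx0r.ne
    have hw0r : 1 + (d:ℝ) * (s - d)⁻¹ < 0 := by
      have h1 : 1 + (d:ℝ) * (s - d)⁻¹ = s / (s - d) := by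
        rw [eq_div_iff hsd.ne, add_mul, mul_assoc, inv_mul_cancel₀ hsd.ne]
        ring
      rw [h1]
      exact div_neg_of_pos_of_neg hs0 hsd
    set w₀ : ℂ := 1 + (d:ℂ) * x₀ with hw₀def
    have hw₀eq : w₀ = (((1 + (d:ℝ) * (s - d)⁻¹ : ℝ)) : ℂ) := by
      rw [hw₀def, hx₀def]; push_cast; ring
    have hre : w₀.re < 0 := by rw [hw₀eq, Complex.ofReal_re]; exact hw0r
    have him : w₀.im = 0 := by rw [hw₀eq]; exact Complex.ofReal_im _
    set L : ℝ := Real.log ‖w₀‖ with hL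
    have hΛ : Complex.log w₀ = (L : ℂ) + Real.pi * Complex.I := by
      apply Complex.ext
      · simp [Complex.log_re, hL]
      · rw [Complex.log_im]
        rw [hw₀eq, Complex.arg_ofReal_of_neg hw0r]
        simp
    set ε : ℕ → ℝ := fun m => ((m:ℝ) + 1)⁻¹ with hε
    have hεpos : ∀ m, 0 < ε m := fun m => by rw [hε]; positivity
    have hεto : Tendsto ε atTop (𝓝 0) := by
      have := tendsto_one_div_add_atTop_nhds_zero_nat (𝕜 := ℝ)
      simpa [hε, one_div] using this
    set z : ℕ → ℂ := fun m => x₀ + (ε m : ℂ) * Complex.I with hz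
    set z' : ℕ → ℂ := fun m => x₀ - (ε m : ℂ) * Complex.I with hz'
    have him_z : ∀ m, (z m).im = ε m := by
      intro m; simp [hz, hx₀def]
    have him_z' : ∀ m, (z' m).im = - ε m := by
      intro m; simp [hz', hx₀def]
    have hzne : ∀ m, z m ≠ 0 := by
      intro m h
      have h2 := him_z m
      rw [h] at h2
      simp only [Complex.zero_im] at h2
      exact (hεpos m).ne h2
    have hz'ne : ∀ m, z' m ≠ 0 := by
      intro m h
      have h2 := him_z' m
      rw [h] at h2
      simp only [Complex.zero_im] at h2
      exact (hεpos m).ne (neg_eq_zero.mp h2.symm).symm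
    have him_wz : ∀ m, (1 + (d:ℂ) * z m).im = d * ε m := by
      intro m
      simp [Complex.add_im, Complex.mul_im, him_z m]
    have him_wz' : ∀ m, (1 + (d:ℂ) * z' m).im = - (d * ε m) := by
      intro m
      simp [Complex.add_im, Complex.mul_im, him_z' m]
    have hdepos : ∀ m, 0 < (d:ℝ) * ε m := fun m => by
      have := hεpos m; positivity
    have hzmem : ∀ m, z m ∈ Om d := by
      intro m
      show 1 + (d:ℂ) * z m ∈ Complex.slitPlane
      rw [Complex.mem_slitPlane_iff]
      right
      rw [him_wz m]
      exact (hdepos m).ne'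
    have hz'mem : ∀ m, z' m ∈ Om d := by
      intro m
      show 1 + (d:ℂ) * z' m ∈ Complex.slitPlane
      rw [Complex.mem_slitPlane_iff]
      right
      rw [him_wz' m]
      simpa using (hdepos m).ne
    have hεC : Tendsto (fun m => ((ε m : ℝ) : ℂ)) atTop (𝓝 0) := by
      have := (Complex.continuous_ofReal.tendsto 0).comp hεto
      simpa [Function.comp_def] using this
    have hzto : Tendsto z atTop (𝓝 x₀) := by
      have := (hεC.mul_const Complex.I).const_add x₀
      simpa [hz] using this
    have hz'to : Tendsto z' atTop (𝓝 x₀) := by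
      have := Tendsto.const_sub x₀ (hεC.mul_const Complex.I)
      simpa [hz'] using this
    have hwlim : Tendsto (fun m => 1 + (d:ℂ) * z m) atTop (𝓝 w₀) := by
      have := (hzto.const_mul ((d:ℕ) : ℂ)).const_add 1
      simpa [hw₀def] using this
    have hwlim' : Tendsto (fun m => 1 + (d:ℂ) * z' m) atTop (𝓝 w₀) := by
      have := (hz'to.const_mul ((d:ℕ) : ℂ)).const_add 1
      simpa [hw₀def] using this
    have hup : Tendsto (fun m => Complex.log (1 + (d:ℂ) * z m)) atTop
        (𝓝 ((L:ℂ) + Real.pi * Complex.I)) := by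
      rw [← hΛ]
      have hcw : ContinuousWithinAt Complex.log {w : ℂ | 0 ≤ w.im} w₀ :=
        Complex.continuousWithinAt_log_of_re_neg_of_im_zero hre him
      apply hcw.tendsto.comp
      rw [tendsto_nhdsWithin_iff]
      refine ⟨hwlim, Eventually.of_forall fun m => ?_⟩
      show 0 ≤ (1 + (d:ℂ) * z m).im
      rw [him_wz m]
      exact (hdepos m).le
    have hdn : Tendsto (fun m => Complex.log (1 + (d:ℂ) * z' m)) atTop
        (𝓝 ((L:ℂ) - Real.pi * Complex.I)) := by
      have hlow := Complex.tendsto_log_nhdsWithin_im_neg_of_re_neg_of_im_zero hre him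
      have hcomp : Tendsto (fun m => 1 + (d:ℂ) * z' m) atTop (𝓝[{w : ℂ | w.im < 0}] w₀) := by
        rw [tendsto_nhdsWithin_iff]
        refine ⟨hwlim', Eventually.of_forall fun m => ?_⟩
        show (1 + (d:ℂ) * z' m).im < 0
        rw [him_wz' m]
        simpa using hdepos m
      have := hlow.comp hcomp
      simpa [hL, Function.comp_def] using this
    have key : ∀ (y : ℕ → ℂ), Tendsto y atTop (𝓝 x₀) → (∀ m, y m ≠ 0) →
        (∀ m, y m ∈ Om d) → ∀ Λv : ℂ,
        Tendsto (fun m => Complex.log (1 + (d:ℂ) * y m)) atTop (𝓝 Λv) →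
        (∑ k ∈ range d, (R k).eval x₀ * g c k x₀) +
          (R d).eval x₀ * Complex.exp (((d:ℂ) - (c:ℂ)) * Λv + Λv * x₀⁻¹) = 0 := by
      intro y hyto hyne hymem Λv hylog
      have hsplit : ∀ m, G (y m) = (∑ k ∈ range d, (R k).eval (y m) * g c k (y m)) +
          (R d).eval (y m) * Complex.exp (((d:ℂ) - (c:ℂ)) * Complex.log (1 + (d:ℂ) * y m)
            + Complex.log (1 + (d:ℂ) * y m) * (y m)⁻¹) := by
        intro m
        simp only [hG]
        rw [Finset.sum_range_succ]
        congr 1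
        rw [g, lg_eq_of_ne (hyne m), div_eq_mul_inv]
      have hlim1 : Tendsto (fun m => ∑ k ∈ range d, (R k).eval (y m) * g c k (y m)) atTop
          (𝓝 (∑ k ∈ range d, (R k).eval x₀ * g c k x₀)) := by
        apply tendsto_finset_sum
        intro k hk
        have hk' : k < d := mem_range.mp hk
        have hsp : 1 + (k:ℂ) * x₀ ∈ Complex.slitPlane := by
          have hkd : (k:ℝ) + 1 ≤ d := by exact_mod_cast hk'
          have hnum : s - (d:ℝ) + k < 0 := by linarith
          have hpos : 0 < 1 + (k:ℝ) * (s - d)⁻¹ := by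
            have hrw : 1 + (k:ℝ) * (s - d)⁻¹ = (s - d + k) * (s - d)⁻¹ := by
              rw [add_mul, mul_inv_cancel₀ hsd.ne]
            rw [hrw]
            exact mul_pos_of_neg_of_neg hnum (inv_neg''.mpr hsd)
          have hcst : 1 + (k:ℂ) * x₀ = (((1 + (k:ℝ) * (s - d)⁻¹ : ℝ)) : ℂ) := by
            rw [hx₀def]; push_cast; ring
          rw [hcst]
          exact Complex.ofReal_mem_slitPlane.mpr hpos
        exact (((R k).continuous.tendsto x₀).comp hyto).mul
          (((cont_g_ne hx0 hsp).tendsto).comp hyto)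
      have hlim2 : Tendsto (fun m => (R d).eval (y m) * Complex.exp
          (((d:ℂ) - (c:ℂ)) * Complex.log (1 + (d:ℂ) * y m)
            + Complex.log (1 + (d:ℂ) * y m) * (y m)⁻¹)) atTop
          (𝓝 ((R d).eval x₀ * Complex.exp (((d:ℂ) - (c:ℂ)) * Λv + Λv * x₀⁻¹))) := by
        apply Tendsto.mul (((R d).continuous.tendsto x₀).comp hyto)
        apply (Complex.continuous_exp.tendsto _).comp
        exact (hylog.const_mul _).add (hylog.mul (hyto.inv₀ hx0))
      have hzero : Tendsto (fun m => G (y m)) atTop (𝓝 0) := by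
        have hh : (fun m => G (y m)) = fun _ => 0 := funext fun m => hEq (hymem m)
        rw [hh]; exact tendsto_const_nhds
      have hcomb : Tendsto (fun m => G (y m)) atTop
          (𝓝 ((∑ k ∈ range d, (R k).eval x₀ * g c k x₀) +
            (R d).eval x₀ * Complex.exp (((d:ℂ) - (c:ℂ)) * Λv + Λv * x₀⁻¹))) := by
        simp only [hsplit]
        exact hlim1.add hlim2
      exact (tendsto_nhds_unique hcomb hzero)
    have h1 := key z hzto hzne hzmem _ hup
    have h2 := key z' hz'to hz'ne hz'mem _ hdn
    have hsub : (R d).eval x₀ *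
        (Complex.exp (((d:ℂ) - (c:ℂ)) * ((L:ℂ) + Real.pi * Complex.I) +
            ((L:ℂ) + Real.pi * Complex.I) * x₀⁻¹) -
         Complex.exp (((d:ℂ) - (c:ℂ)) * ((L:ℂ) - Real.pi * Complex.I) +
            ((L:ℂ) - Real.pi * Complex.I) * x₀⁻¹)) = 0 := by
      linear_combination h1 - h2
    have hx₀inv : x₀⁻¹ = ((s : ℂ) - (d : ℂ)) := by
      rw [hx₀def, ← Complex.ofReal_inv, inv_inv]
      push_cast; ring
    have hexpne : Complex.exp (((d:ℂ) - (c:ℂ)) * ((L:ℂ) + Real.pi * Complex.I) +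
            ((L:ℂ) + Real.pi * Complex.I) * x₀⁻¹) ≠
        Complex.exp (((d:ℂ) - (c:ℂ)) * ((L:ℂ) - Real.pi * Complex.I) +
            ((L:ℂ) - Real.pi * Complex.I) * x₀⁻¹) := by
      intro hEq2
      rw [Complex.exp_eq_exp_iff_exp_sub_eq_one, Complex.exp_eq_one_iff] at hEq2
      obtain ⟨n, hn⟩ := hEq2
      have hdiff : (((d:ℂ) - (c:ℂ)) * ((L:ℂ) + Real.pi * Complex.I) +
            ((L:ℂ) + Real.pi * Complex.I) * x₀⁻¹) -
          (((d:ℂ) - (c:ℂ)) * ((L:ℂ) - Real.pi * Complex.I) +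
            ((L:ℂ) - Real.pi * Complex.I) * x₀⁻¹)
          = ((s:ℂ) - (c:ℂ)) * (2 * (Real.pi:ℂ) * Complex.I) := by
        rw [hx₀inv]; ring
      rw [hdiff] at hn
      have h2πI : (2 * (Real.pi:ℂ) * Complex.I) ≠ 0 := by
        simp [Real.pi_ne_zero, Complex.I_ne_zero, Complex.ofReal_ne_zero]
      have hcast : ((s:ℂ) - (c:ℂ)) = (n:ℂ) := by
        apply mul_right_cancel₀ h2πI
        rw [hn]
      have hnr : ((n:ℤ):ℝ) = s - c := by
        have hc2 : (((s - (c:ℕ) : ℝ)):ℂ) = (((n:ℤ):ℝ):ℂ) := by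
          push_cast
          push_cast at hcast
          linear_combination hcast
        exact (Complex.ofReal_inj.mp hc2).symm
      interval_cases c
      · have h0 : (0:ℝ) < ((n:ℤ):ℝ) := by rw [hnr]; push_cast; linarith
        have h1' : (((n:ℤ)):ℝ) < 1 := by rw [hnr]; push_cast; linarith
        have h0' : 0 < n := by exact_mod_cast h0
        have h1'' : n < 1 := by exact_mod_cast h1'
        omega
      · have h0 : (-1:ℝ) < ((n:ℤ):ℝ) := by rw [hnr]; push_cast; linarith
        have h1' : (((n:ℤ)):ℝ) < 0 := by rw [hnr]; push_cast; linarith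
        have h0' : -1 < n := by exact_mod_cast h0
        have h1'' : n < 0 := by exact_mod_cast h1'
        omega
    rcases mul_eq_zero.mp hsub with h | h
    · exact h
    · exact absurd (sub_eq_zero.mp h) hexpne
  apply Polynomial.eq_zero_of_infinite_isRoot
  apply Set.infinite_of_injective_forall_mem
    (f := fun m : ℕ => ((((((m : ℝ) + 2)⁻¹ - d)⁻¹ : ℝ)) : ℂ))
  · intro a b hab
    dsimp only at hab
    have h2a : (0:ℝ) < (a : ℝ) + 2 := by positivity
    have h2b : (0:ℝ) < (b : ℝ) + 2 := by positivity
    have hd1 : (1:ℝ) ≤ d := by exact_mod_cast hd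
    have hna : ((a : ℝ) + 2)⁻¹ - (d : ℝ) ≠ 0 := by
      have : ((a : ℝ) + 2)⁻¹ ≤ 1/2 := by
        rw [inv_le_comm₀ h2a (by norm_num)]
        · norm_num
      linarith
    have hnb : ((b : ℝ) + 2)⁻¹ - (d : ℝ) ≠ 0 := by
      have : ((b : ℝ) + 2)⁻¹ ≤ 1/2 := by
        rw [inv_le_comm₀ h2b (by norm_num)]
        · norm_num
      linarith
    have h1 : ((((a : ℝ) + 2)⁻¹ - d)⁻¹ : ℝ) = ((((b : ℝ) + 2)⁻¹ - d)⁻¹ : ℝ) := by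
      exact_mod_cast hab
    rw [inv_inj] at h1
    have h2 : (((a : ℝ) + 2)⁻¹ : ℝ) = (((b : ℝ) + 2)⁻¹ : ℝ) := by linarith
    rw [inv_inj] at h2
    have : ((a : ℝ)) = b := by linarith
    exact_mod_cast this
  · intro m
    apply hroot
    · positivity
    · have h2m : (0:ℝ) < (m : ℝ) + 2 := by positivity
      rw [inv_lt_one_iff₀]
      right
      linarith


lemma fact_prod (n k : ℕ) : (n + k).factorial = n.factorial * ∏ i ∈ Ioc 0 k, (n + i) := by
  induction k with
  | zero => simp
  | succ k ih =>
    rw [Finset.prod_Ioc_succ_top (Nat.zero_le _), show n + (k+1) = (n+k)+1 from rfl,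
      Nat.factorial_succ, ih]
    ring

theorem not_holo_b : ¬ HolonomicSeq (fun n : ℕ => (n : ℂ) ^ n) := by
  rintro ⟨d, p, hp0, hrec⟩
  set N := (range (d+1)).sup (fun j => (p j).natDegree) with hN
  have hdeg : ∀ j, j ≤ d → (p j).natDegree ≤ N :=
    fun j hj => Finset.le_sup (f := fun j => (p j).natDegree) (mem_range.mpr (Nat.lt_succ_of_le hj))
  set R : ℕ → Polynomial ℂ := fun k => Q N (p (d - k)) * Polynomial.X ^ (d - k) with hRdef
  have hRd : R d = Q N (p 0) := by
    rw [hRdef]; simp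
  have hmaster : R d = 0 := by
    apply master d 0 (Nat.zero_le 1) R
    intro n hn
    have hn0 : ((n:ℂ)) ≠ 0 := Nat.cast_ne_zero.mpr (Nat.one_le_iff_ne_zero.mp hn)
    have hxne : ((n:ℂ))⁻¹ ≠ 0 := inv_ne_zero hn0
    have hterm : ∀ k ∈ range (d+1),
        (R k).eval ((n:ℂ)⁻¹) * (1 + (k:ℂ) * ((n:ℂ)⁻¹)) ^ (n + k - 0)
        = ((n:ℂ)⁻¹) ^ (N + d + n) *
            ((p (d-k)).eval (n:ℂ) * ((n + k : ℕ) : ℂ) ^ (n + k)) := by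
      intro k hk
      have hkd : k ≤ d := Nat.lt_succ_iff.mp (mem_range.mp hk)
      have hbase : (1 + (k:ℂ) * ((n:ℂ)⁻¹)) = ((n + k : ℕ) : ℂ) * ((n:ℂ)⁻¹) := by
        push_cast
        field_simp
      rw [Nat.sub_zero, hRdef]
      simp only
      rw [Polynomial.eval_mul, Polynomial.eval_pow, Polynomial.eval_X,
        Q_eval (hdeg (d-k) (Nat.sub_le d k)) hxne, inv_inv, hbase, mul_pow,
        show N + d + n = N + (d - k) + (n + k) from by omega, pow_add, pow_add]
      ring
    rw [Finset.sum_congr rfl hterm, ← Finset.mul_sum]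
    have hsum : ∑ k ∈ range (d+1), (p (d-k)).eval (n:ℂ) * ((n + k:ℕ):ℂ) ^ (n + k) = 0 := by
      have hrefl := Finset.sum_range_reflect
        (fun j => (p j).eval (n:ℂ) * ((n + (d - j) : ℕ):ℂ) ^ (n + (d - j))) (d+1)
      simp only [Nat.add_sub_cancel] at hrefl
      have hstep : ∑ k ∈ range (d+1), (p (d-k)).eval (n:ℂ) * ((n + k:ℕ):ℂ) ^ (n + k)
          = ∑ k ∈ range (d+1),
              (p (d-k)).eval (n:ℂ) * ((n + (d - (d - k)) : ℕ):ℂ) ^ (n + (d - (d - k))) := by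
        refine Finset.sum_congr rfl fun k hk => ?_
        rw [Nat.sub_sub_self (Nat.lt_succ_iff.mp (mem_range.mp hk))]
      rw [hstep, hrefl]
      have := hrec n
      simpa using this
    rw [hsum, mul_zero]
  rw [hRd] at hmaster
  exact hp0 (Q_eq_zero (hdeg 0 (Nat.zero_le d)) hmaster)

theorem not_holo_a : ¬ HolonomicSeq (fun n : ℕ =>
    if n = 0 then 0 else (n : ℂ) ^ (n - 1) / (n.factorial : ℂ)) := by
  rintro ⟨d, p, hp0, hrec⟩
  set f : ℕ → ℂ := fun n => if n = 0 then 0 else (n : ℂ) ^ (n - 1) / (n.factorial : ℂ) with hf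
  set N := (range (d+1)).sup (fun j => (p j).natDegree) with hN
  have hdeg : ∀ j, j ≤ d → (p j).natDegree ≤ N :=
    fun j hj => Finset.le_sup (f := fun j => (p j).natDegree) (mem_range.mpr (Nat.lt_succ_of_le hj))
  set R : ℕ → Polynomial ℂ := fun k => Q N (p (d - k)) *
      ∏ i ∈ Ioc k d, (Polynomial.C (i:ℂ) * Polynomial.X + 1) with hRdef
  have hRd : R d = Q N (p 0) := by
    rw [hRdef]; simp
  have hmaster : R d = 0 := by
    apply master d 1 le_rfl R
    intro n hn
    have hn0 : ((n:ℂ)) ≠ 0 := Nat.cast_ne_zero.mpr (Nat.one_le_iff_ne_zero.mp hn)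
    have hxne : ((n:ℂ))⁻¹ ≠ 0 := inv_ne_zero hn0
    have hterm : ∀ k ∈ range (d+1),
        (R k).eval ((n:ℂ)⁻¹) * (1 + (k:ℂ) * ((n:ℂ)⁻¹)) ^ (n + k - 1)
        = ((n:ℂ)⁻¹) ^ (N + d + n - 1) *
            ((n.factorial * ∏ i ∈ Ioc 0 d, (n + i) : ℕ) : ℂ) *
            ((p (d-k)).eval (n:ℂ) * f (n + k)) := by
      intro k hk
      have hkd : k ≤ d := Nat.lt_succ_iff.mp (mem_range.mp hk)
      have hbase : (1 + (k:ℂ) * ((n:ℂ)⁻¹)) = ((n + k : ℕ) : ℂ) * ((n:ℂ)⁻¹) := by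
        push_cast
        field_simp
      have hfac : ∀ i ∈ Ioc k d, (Polynomial.C (i:ℂ) * Polynomial.X + 1).eval ((n:ℂ)⁻¹)
          = ((n + i : ℕ) : ℂ) * ((n:ℂ)⁻¹) := by
        intro i hi
        simp only [Polynomial.eval_add, Polynomial.eval_mul, Polynomial.eval_C,
          Polynomial.eval_X, Polynomial.eval_one]
        push_cast
        field_simp
        ring
      have hpow : ((n + k : ℕ) : ℂ) ^ (n + k - 1) = f (n + k) * ((n + k).factorial : ℂ) := by
        have hne : n + k ≠ 0 := by omega
        rw [hf]
        simp only [hne, if_false]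
        rw [div_mul_cancel₀]
        exact Nat.cast_ne_zero.mpr (Nat.factorial_ne_zero _)
      have hNat : (n + k).factorial * ∏ i ∈ Ioc k d, (n + i)
          = n.factorial * ∏ i ∈ Ioc 0 d, (n + i) := by
        rw [fact_prod, mul_assoc, Finset.prod_Ioc_consecutive _ (Nat.zero_le k) hkd]
      have hC : ((n + k).factorial : ℂ) * ∏ i ∈ Ioc k d, ((n + i : ℕ) : ℂ)
          = ((n.factorial * ∏ i ∈ Ioc 0 d, (n + i) : ℕ) : ℂ) := by
        push_cast
        exact_mod_cast hNat
      rw [hRdef]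
      simp only
      rw [Polynomial.eval_mul, Polynomial.eval_prod,
        Q_eval (hdeg (d-k) (Nat.sub_le d k)) hxne, inv_inv,
        Finset.prod_congr rfl hfac, Finset.prod_mul_distrib, Finset.prod_const,
        Nat.card_Ioc, hbase, mul_pow, hpow,
        show N + d + n - 1 = N + (d - k) + (n + k - 1) from by omega, pow_add, pow_add]
      linear_combination (((n:ℂ)⁻¹) ^ (N + (d-k)) * ((n:ℂ)⁻¹) ^ (n + k - 1) *
        (p (d-k)).eval (n:ℂ) * f (n + k)) * hC
    rw [Finset.sum_congr rfl hterm, ← Finset.mul_sum]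
    have hsum : ∑ k ∈ range (d+1), (p (d-k)).eval (n:ℂ) * f (n + k) = 0 := by
      have hrefl := Finset.sum_range_reflect
        (fun j => (p j).eval (n:ℂ) * f (n + (d - j))) (d+1)
      simp only [Nat.add_sub_cancel] at hrefl
      have hstep : ∑ k ∈ range (d+1), (p (d-k)).eval (n:ℂ) * f (n + k)
          = ∑ k ∈ range (d+1), (p (d-k)).eval (n:ℂ) * f (n + (d - (d - k))) := by
        refine Finset.sum_congr rfl fun k hk => ?_
        rw [Nat.sub_sub_self (Nat.lt_succ_iff.mp (mem_range.mp hk))]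
      rw [hstep, hrefl]
      exact hrec n
    rw [hsum, mul_zero]
  rw [hRd] at hmaster
  exact hp0 (Q_eq_zero (hdeg 0 (Nat.zero_le d)) hmaster)


end CayleyNH

/-- The coefficient sequence `n^{n-1}/n!` of the Cayley tree function
`T(z) = ∑_{n≥1} n^{n-1} z^n/n!` is not holonomic, and neither is `n^n`. -/
theorem cayley_not_holonomic :
    ¬ HolonomicSeq (fun n : ℕ =>
        if n = 0 then 0 else (n : ℂ) ^ (n - 1) / (n.factorial : ℂ)) ∧
    ¬ HolonomicSeq (fun n : ℕ => (n : ℂ) ^ n) :=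
  ⟨CayleyNH.not_holo_a, CayleyNH.not_holo_b⟩
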